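/- arXiv:1903.05613 — 3 statements merged into one kernel-verified Lean document; each statement's English description precedes it below -/
import Mathlib

section
/- For odd n ≥ 3 and m ≥ 3, every radio labeling of P_n □ K_m has span at least (mn² − 2n + m + 2)/2; in particular the lower bound (mn² − 2n + m)/2 from the level-sum argument with L₀ the central K_m-fiber is not attained. -/
open SimpleGraph Finset

/-- The Petersen graph as the Kneser graph K(5,2). -/
def petersen : SimpleGraph {s : Finset (Fin 5) // s.card = 2} where
  Adj a b := Disjoint a.1 b.1
  symm := ⟨fun _ _ h => h.symm⟩
  loopless := ⟨fun a h => by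
    have h0 : a.1 = ⊥ := disjoint_self.mp h
    have h2 := a.2
    rw [h0] at h2
    simp at h2⟩

/-- A radio labeling of `G`: for all distinct `u, v`,
`d(u,v) + |φ(u) - φ(v)| ≥ diam(G) + 1`. -/
def IsRadioLabeling {V : Type*} (G : SimpleGraph V) (φ : V → ℕ) : Prop :=
  ∀ u v : V, u ≠ v → (G.diam : ℤ) + 1 ≤ (G.dist u v : ℤ) + |(φ u : ℤ) - (φ v : ℤ)|

/-- The span of a labeling: the maximum difference between two labels. -/
noncomputable def span {V : Type*} (φ : V → ℕ) : ℕ :=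
  sSup (Set.range fun p : V × V => φ p.1 - φ p.2)

/-- The radio number of `G`: the minimum span over all radio labelings. -/
noncomputable def radioNumber {V : Type*} (G : SimpleGraph V) : ℕ :=
  sInf {s | ∃ φ : V → ℕ, IsRadioLabeling G φ ∧ span φ = s}

/-- `d(v, S)`: the minimum distance from `v` to a vertex of `S`. -/
noncomputable def distToSet {V : Type*} (G : SimpleGraph V) (v : V) (S : Finset V) : ℕ :=
  sInf ((fun w => G.dist v w) '' ↑S)

/-- `diam(S)`: the maximum distance in `G` between two vertices of `S`. -/
noncomputable def setDiam {V : Type*} (G : SimpleGraph V) (S : Finset V) : ℕ :=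
  sSup {d | ∃ x ∈ S, ∃ y ∈ S, G.dist x y = d}


lemma pgWalk (n : ℕ) : ∀ (k : ℕ) (a b : Fin n), Nat.dist a.val b.val = k →
    ∃ w : (pathGraph n).Walk a b, w.length = k
  | 0, a, b, h => by
    have : a = b := Fin.ext (by simp [Nat.dist] at h; omega)
    subst this; exact ⟨Walk.nil, rfl⟩
  | (k+1), a, b, h => by
    rcases lt_trichotomy a.val b.val with hlt | heq | hgt
    · have hlt' : a.val + 1 < n := lt_of_le_of_lt hlt b.isLt
      have hadj : (pathGraph n).Adj a ⟨a.val + 1, hlt'⟩ := pathGraph_adj.mpr (Or.inl rfl)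
      obtain ⟨w, hw⟩ := pgWalk n k ⟨a.val + 1, hlt'⟩ b (by simp [Nat.dist] at h ⊢; omega)
      exact ⟨Walk.cons hadj w, by simp [hw]⟩
    · exact absurd (Fin.ext heq ▸ h) (by simp [Nat.dist])
    · have h1 : a.val - 1 < n := by omega
      have hadj : (pathGraph n).Adj a ⟨a.val - 1, h1⟩ := pathGraph_adj.mpr (Or.inr (by simp; omega))
      obtain ⟨w, hw⟩ := pgWalk n k ⟨a.val - 1, h1⟩ b (by simp [Nat.dist] at h ⊢; omega)
      exact ⟨Walk.cons hadj w, by simp [hw]⟩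

lemma walkLower {n m : ℕ} {x y : Fin n × Fin m}
    (w : (pathGraph n □ (⊤ : SimpleGraph (Fin m))).Walk x y) :
    Nat.dist x.1.val y.1.val + (if x.2 = y.2 then 0 else 1) ≤ w.length := by
  induction w with
  | nil => simp [Nat.dist]
  | @cons u v z hadj w ih =>
    rw [Walk.length_cons]
    rcases boxProd_adj.mp hadj with ⟨h1, h2⟩ | ⟨h1, h2⟩
    · have := pathGraph_adj.mp h1
      by_cases hc : u.2 = z.2 <;> by_cases hc2 : v.2 = z.2 <;>
        simp_all [Nat.dist] <;> omega
    · have : u.1 = v.1 := h2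
      by_cases hc : u.2 = z.2 <;> by_cases hc2 : v.2 = z.2 <;>
        simp_all [Nat.dist] <;> omega


lemma topConn {m : ℕ} (hm : 0 < m) : (⊤ : SimpleGraph (Fin m)).Connected := by
  have : Nonempty (Fin m) := ⟨⟨0, hm⟩⟩
  refine ⟨fun u v => ?_⟩
  by_cases h : u = v
  · exact h ▸ Reachable.refl u
  · exact SimpleGraph.Adj.reachable (by simpa using h)

lemma GConn {n m : ℕ} (hn : 0 < n) (hm : 0 < m) :
    (pathGraph n □ (⊤ : SimpleGraph (Fin m))).Connected := by
  obtain ⟨n', rfl⟩ : ∃ n', n = n' + 1 := ⟨n - 1, by omega⟩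
  exact (pathGraph_connected n').boxProd (topConn hm)


lemma boxProdLeft_length {α β : Type*} {G : SimpleGraph α} (H : SimpleGraph β) {a b : α}
    (w : G.Walk a b) (c : β) : (w.boxProdLeft H c).length = w.length := by
  unfold SimpleGraph.Walk.boxProdLeft; exact SimpleGraph.Walk.length_map _ _

lemma distFormula {n m : ℕ} (hn : 0 < n) (hm : 0 < m) (x y : Fin n × Fin m) :
    (pathGraph n □ (⊤ : SimpleGraph (Fin m))).dist x y =
      Nat.dist x.1.val y.1.val + (if x.2 = y.2 then 0 else 1) := by
  obtain ⟨x1, x2⟩ := x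
  obtain ⟨y1, y2⟩ := y
  refine le_antisymm ?_ ?_
  · obtain ⟨w1, hw1⟩ := pgWalk n (Nat.dist x1.val y1.val) x1 y1 rfl
    by_cases hc : x2 = y2
    · subst hc
      have := SimpleGraph.dist_le (w1.boxProdLeft (⊤ : SimpleGraph (Fin m)) x2)
      rw [boxProdLeft_length] at this
      simpa [hw1] using this
    · have hadj : (pathGraph n □ (⊤ : SimpleGraph (Fin m))).Adj (y1, x2) (y1, y2) :=
        boxProd_adj_right.mpr (by simpa using hc)
      have := SimpleGraph.dist_le
        ((w1.boxProdLeft (⊤ : SimpleGraph (Fin m)) x2).append (Walk.cons hadj Walk.nil))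
      rw [SimpleGraph.Walk.length_append, boxProdLeft_length] at this
      simpa [hw1, hc] using this
  · obtain ⟨w, hw⟩ := (GConn hn hm).exists_walk_length_eq_dist (x1, x2) (y1, y2)
    exact hw ▸ walkLower w

lemma ediamNeTop {n m : ℕ} (hn : 0 < n) (hm : 0 < m) :
    (pathGraph n □ (⊤ : SimpleGraph (Fin m))).ediam ≠ ⊤ := by
  have : Nonempty (Fin n × Fin m) := ⟨(⟨0, hn⟩, ⟨0, hm⟩)⟩
  obtain ⟨u, v, h⟩ := SimpleGraph.exists_edist_eq_ediam_of_finite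
    (G := pathGraph n □ (⊤ : SimpleGraph (Fin m)))
  rw [← h]
  exact SimpleGraph.edist_ne_top_iff_reachable.mpr ((GConn hn hm) u v)

lemma diamGe {n m : ℕ} (hn : 3 ≤ n) (hm : 2 ≤ m) :
    n ≤ (pathGraph n □ (⊤ : SimpleGraph (Fin m))).diam := by
  have hn0 : 0 < n := by omega
  have hm0 : 0 < m := by omega
  have h := SimpleGraph.dist_le_diam (ediamNeTop hn0 hm0)
    (u := ((⟨0, hn0⟩ : Fin n), (⟨0, hm0⟩ : Fin m))) (v := ((⟨n-1, by omega⟩ : Fin n), (⟨1, by omega⟩ : Fin m)))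
  rw [distFormula hn0 hm0] at h
  simp only [Nat.dist] at h
  have : (⟨0, hm0⟩ : Fin m) ≠ ⟨1, by omega⟩ := by simp [Fin.ext_iff]
  rw [if_neg this] at h
  omega

lemma distLeDiam {n m : ℕ} (hn : 0 < n) (hm : 0 < m) (u v : Fin n × Fin m) :
    (pathGraph n □ (⊤ : SimpleGraph (Fin m))).dist u v ≤
      (pathGraph n □ (⊤ : SimpleGraph (Fin m))).diam :=
  SimpleGraph.dist_le_diam (ediamNeTop hn hm)

lemma sumDistCenter : ∀ c : ℕ, ∑ p ∈ Finset.range (2*c+1), Nat.dist p c = c*(c+1)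
  | 0 => by simp
  | (c+1) => by
    have h1 : 2*(c+1)+1 = (2*c+2)+1 := by ring
    rw [h1, Finset.sum_range_succ, Finset.sum_range_succ']
    have h2 : ∀ p, Nat.dist (p+1) (c+1) = Nat.dist p c := fun p => Nat.dist_succ_succ
    simp only [h2, sumDistCenter c]
    simp [Nat.dist]
    ring_nf
    omega

lemma sortedEnum {V : Type*} [Fintype V] (φ : V → ℕ) (hinj : Function.Injective φ)
    {N : ℕ} (hN : Fintype.card V = N) (hN0 : 0 < N) :
    ∃ x : ℕ → V, (∀ i j, i < j → j < N → φ (x i) < φ (x j)) ∧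
      (∀ v, ∃ k, k < N ∧ x k = v) := by
  letI : LinearOrder V := LinearOrder.lift' φ hinj
  let e := Fintype.orderIsoFinOfCardEq V hN
  refine ⟨fun k => if h : k < N then e ⟨k, h⟩ else e ⟨0, hN0⟩, fun i j hij hj => ?_, fun v => ?_⟩
  · have hi : i < N := lt_trans hij hj
    simp only [dif_pos hi, dif_pos hj]
    have : e ⟨i, hi⟩ < e ⟨j, hj⟩ := e.strictMono (by simpa using hij)
    exact lt_of_le_of_ne this.le (fun h => absurd (hinj h) (ne_of_lt this))
  · refine ⟨(e.symm v).val, (e.symm v).isLt, ?_⟩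
    simp [dif_pos (e.symm v).isLt]


lemma posCard {V' : Type*} [Fintype V'] [DecidableEq V'] {N : ℕ} (x : ℕ → V')
    (hinj : ∀ i j, i < N → j < N → x i = x j → i = j) (hsurj : ∀ v, ∃ k < N, x k = v)
    (Q : V' → Prop) [DecidablePred Q] :
    ((Finset.range N).filter (fun k => Q (x k))).card = (Finset.univ.filter Q).card := by
  refine Finset.card_bij (fun k _ => x k) ?_ ?_ ?_
  · intro k hk
    rw [Finset.mem_filter] at hk ⊢
    exact ⟨Finset.mem_univ _, hk.2⟩
  · intro k1 hk1 k2 hk2 he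
    rw [Finset.mem_filter, Finset.mem_range] at hk1 hk2
    exact hinj k1 k2 hk1.1 hk2.1 he
  · intro v hv
    rw [Finset.mem_filter] at hv
    obtain ⟨k, hk, hkv⟩ := hsurj v
    exact ⟨k, Finset.mem_filter.mpr ⟨Finset.mem_range.mpr hk, hkv ▸ hv.2⟩, hkv⟩

theorem stmt_15' (n m : ℕ) (hn : 3 ≤ n) (ho : Odd n) (hm : 3 ≤ m)
    (φ : Fin n × Fin m → ℕ)
    (hφ : ∀ u v : Fin n × Fin m, u ≠ v →
      ((pathGraph n □ (⊤ : SimpleGraph (Fin m))).diam : ℤ) + 1 ≤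
        ((pathGraph n □ (⊤ : SimpleGraph (Fin m))).dist u v : ℤ) + |(φ u : ℤ) - (φ v : ℤ)|)
    (hcon : 2 * ((sSup (Set.range fun p : (Fin n × Fin m) × (Fin n × Fin m) =>
        φ p.1 - φ p.2) : ℕ) : ℤ) < (m : ℤ) * n ^ 2 - 2 * n + m + 2) : False := by
  classical
  obtain ⟨c, hc⟩ := ho
  have hc1 : 1 ≤ c := by omega
  have hn0 : 0 < n := by omega
  have hm0 : 0 < m := by omega
  set G := pathGraph n □ (⊤ : SimpleGraph (Fin m)) with hGdef
  have hdiam : n ≤ G.diam := diamGe hn (by omega)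
  have hdd : ∀ u v : Fin n × Fin m, G.dist u v ≤ G.diam := fun u v => distLeDiam hn0 hm0 u v
  have hinj : Function.Injective φ := by
    intro u v h
    by_contra hne
    have h1 := hφ u v hne
    have h2 := hdd u v
    rw [h] at h1
    simp only [sub_self, abs_zero, add_zero] at h1
    omega
  obtain ⟨N, hN⟩ : ∃ N, N = n * m := ⟨_, rfl⟩
  have hcard : Fintype.card (Fin n × Fin m) = N := by simp [hN]
  have hN9 : 9 ≤ N := by have := Nat.mul_le_mul hn hm; omega
  obtain ⟨K, hK⟩ : ∃ K, N = K + 1 := ⟨N - 1, by omega⟩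
  have hK8 : 8 ≤ K := by omega
  obtain ⟨x, hmono, hsurj⟩ := sortedEnum φ hinj hcard (by omega)
  set P : ℕ → ℕ := fun k => (x k).1.val with hP
  set L : ℕ → ℕ := fun k => Nat.dist (P k) c with hL
  set F : ℕ → ℤ := fun k => (φ (x k) : ℤ) with hF
  have hxne : ∀ i j, i < j → j < N → x i ≠ x j := by
    intro i j hij hj he
    exact absurd (congrArg φ he) (ne_of_lt (hmono i j hij hj))
  have hstep : ∀ i j, i < j → j < N → (n : ℤ) + 1 ≤ (G.dist (x i) (x j) : ℤ) + (F j - F i) := by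
    intro i j hij hj
    have h1 := hφ (x i) (x j) (hxne i j hij hj)
    have h2 : |(φ (x i) : ℤ) - (φ (x j) : ℤ)| = F j - F i := by
      rw [abs_sub_comm, abs_of_nonneg (sub_nonneg.mpr (by exact_mod_cast (hmono i j hij hj).le))]
    rw [h2] at h1
    have h3 : (n : ℤ) ≤ G.diam := by exact_mod_cast hdiam
    linarith
  have hdform : ∀ u v : Fin n × Fin m,
      G.dist u v = Nat.dist u.1.val v.1.val + (if u.2 = v.2 then 0 else 1) :=
    distFormula hn0 hm0
  have hd_le : ∀ i j, G.dist (x i) (x j) ≤ L i + L j + 1 := by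
    intro i j
    rw [hdform]
    simp only [hL, hP, Nat.dist]
    split <;> omega
  have hstep1 : ∀ i ∈ Finset.range K, ((n:ℤ) - L i - L (i+1)) ≤ F (i+1) - F i := by
    intro i hi
    rw [Finset.mem_range] at hi
    have h1 := hstep i (i+1) (Nat.lt_succ_self i) (by omega)
    have h2 : (G.dist (x i) (x (i+1)) : ℤ) ≤ (L i : ℤ) + L (i+1) + 1 := by
      exact_mod_cast hd_le i (i+1)
    linarith
  have tele : ∑ i ∈ Finset.range K, (F (i+1) - F i) = F K - F 0 :=
    Finset.sum_range_sub F K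
  have hSnat : ∑ i ∈ Finset.range N, L i = m * (c * (c+1)) := by
    have hb : ∑ i ∈ Finset.range N, L i = ∑ v : Fin n × Fin m, Nat.dist v.1.val c := by
      refine Finset.sum_bij (fun k _ => x k) (fun k _ => Finset.mem_univ _) ?_ ?_ ?_
      · intro k1 hk1 k2 hk2 he
        rw [Finset.mem_range] at hk1 hk2
        rcases lt_trichotomy k1 k2 with h | h | h
        · exact absurd he (hxne k1 k2 h hk2)
        · exact h
        · exact absurd he.symm (hxne k2 k1 h hk1)
      · intro v _
        obtain ⟨k, hk, hkv⟩ := hsurj v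
        exact ⟨k, Finset.mem_range.mpr hk, hkv⟩
      · intro k _; rfl
    rw [hb, Fintype.sum_prod_type]
    simp only [Finset.sum_const, Finset.card_univ, Fintype.card_fin, smul_eq_mul]
    rw [← Finset.mul_sum, Fin.sum_univ_eq_sum_range (fun p => Nat.dist p c),
      show n = 2*c+1 from hc, sumDistCenter c]
  have hS : ∑ i ∈ Finset.range N, (L i : ℤ) = (m : ℤ) * (c * (c+1)) := by
    have := congrArg (Nat.cast : ℕ → ℤ) hSnat
    push_cast at this
    exact this
  have hsumL1 : ∑ i ∈ Finset.range K, (L i : ℤ)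
      = (∑ i ∈ Finset.range N, (L i : ℤ)) - L K := by
    rw [hK, Finset.sum_range_succ]; ring
  have hsumL2 : ∑ i ∈ Finset.range K, (L (i+1) : ℤ)
      = (∑ i ∈ Finset.range N, (L i : ℤ)) - L 0 := by
    rw [hK, Finset.sum_range_succ']; ring
  have hsplit : ∑ i ∈ Finset.range K, ((n:ℤ) - L i - L (i+1))
      = (K:ℤ) * n - 2 * ((m : ℤ) * (c * (c+1))) + L 0 + L K := by
    rw [Finset.sum_sub_distrib, Finset.sum_sub_distrib, Finset.sum_const, Finset.card_range,
      hsumL1, hsumL2, hS]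
    push_cast
    ring
  have hsum1 : (K:ℤ) * n - 2 * ((m : ℤ) * (c * (c+1))) + L 0 + L K ≤ F K - F 0 := by
    rw [← hsplit, ← tele]
    exact Finset.sum_le_sum hstep1
  set sp : ℕ := sSup (Set.range fun p : (Fin n × Fin m) × (Fin n × Fin m) => φ p.1 - φ p.2)
    with hsp
  have hspan : F K - F 0 ≤ (sp : ℤ) := by
    have hb : BddAbove (Set.range fun p : (Fin n × Fin m) × (Fin n × Fin m) => φ p.1 - φ p.2) :=
      (Set.finite_range _).bddAbove
    have h1 : φ (x K) - φ (x 0) ≤ sp := le_csSup hb ⟨(x K, x 0), rfl⟩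
    have h2 : φ (x 0) ≤ φ (x K) := (hmono 0 K (by omega) (by omega)).le
    simp only [hF]
    omega
  have hbase : 2 * ((K:ℤ) * n - 2 * ((m : ℤ) * (c * (c+1))))
      = (m : ℤ) * n ^ 2 - 2 * n + m := by
    have h1 : (K : ℤ) = (n : ℤ) * m - 1 := by
      have : N = n * m := hN
      omega
    have h2 : (n : ℤ) = 2 * c + 1 := by exact_mod_cast hc
    rw [h1, h2]
    ring
  have hL00 : L 0 = 0 := by
    by_contra hh
    have h1 : (1:ℤ) ≤ L 0 := by omega
    have l1 : (0:ℤ) ≤ L K := Int.natCast_nonneg _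
    linarith
  have hLK0 : L K = 0 := by
    by_contra hh
    have h1 : (1:ℤ) ≤ L K := by omega
    have l0 : (0:ℤ) ≤ L 0 := Int.natCast_nonneg _
    linarith
  -- all slacks are zero
  have hslack : ∀ i ∈ Finset.range K, F (i+1) - F i = (n:ℤ) - L i - L (i+1) := by
    have hnn : ∀ i ∈ Finset.range K,
        (0:ℤ) ≤ (F (i+1) - F i) - ((n:ℤ) - L i - L (i+1)) := by
      intro i hi
      have := hstep1 i hi
      linarith
    have hsum0 : ∑ i ∈ Finset.range K, ((F (i+1) - F i) - ((n:ℤ) - L i - L (i+1))) ≤ 0 := by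
      rw [Finset.sum_sub_distrib, tele, hsplit, hL00, hLK0]
      push_cast
      linarith
    have heq0 : ∑ i ∈ Finset.range K, ((F (i+1) - F i) - ((n:ℤ) - L i - L (i+1))) = 0 :=
      le_antisymm hsum0 (Finset.sum_nonneg hnn)
    intro i hi
    have := (Finset.sum_eq_zero_iff_of_nonneg hnn).mp heq0 i hi
    linarith
  -- distance tightness
  have hdtight : ∀ i, i < K → G.dist (x i) (x (i+1)) = L i + L (i+1) + 1 := by
    intro i hi
    have h1 := hstep i (i+1) (Nat.lt_succ_self i) (by omega)
    have h2 := hslack i (Finset.mem_range.mpr hi)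
    rw [h2] at h1
    have h3 := hd_le i (i+1)
    have h4 : (L i : ℤ) + L (i+1) + 1 ≤ G.dist (x i) (x (i+1)) := by linarith
    omega
  have hFdiff : ∀ i, i < K → F (i+1) - F i = (n:ℤ) + 1 - (L i + L (i+1) + 1) := by
    intro i hi
    have := hslack i (Finset.mem_range.mpr hi)
    rw [this]
    push_cast
    ring
  -- sides and columns
  have hSide : ∀ i, i < K →
      ((x i).2 ≠ (x (i+1)).2) ∧ ((P i ≤ c ∧ c ≤ P (i+1)) ∨ (P (i+1) ≤ c ∧ c ≤ P i)) := by
    intro i hi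
    have h1 := hdtight i hi
    rw [hdform] at h1
    simp only [hL, hP] at h1 ⊢
    constructor
    · intro hcol
      rw [if_pos hcol] at h1
      simp only [Nat.dist] at h1
      omega
    · by_cases hcol : (x i).2 = (x (i+1)).2
      · rw [if_pos hcol] at h1
        simp only [Nat.dist] at h1
        omega
      · rw [if_neg hcol] at h1
        simp only [Nat.dist] at h1
        omega
  have hPlt : ∀ k, P k < n := fun k => (x k).1.isLt
  have hExt : ∀ k, 1 ≤ k → k + 1 < N → (P k = 0 ∨ P k = 2*c) →
      (P (k-1) = c ∨ P (k+1) = c) := by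
    intro k hk1 hkN hPk
    by_contra hcontra
    push_neg at hcontra
    obtain ⟨hA, hB⟩ := hcontra
    have hk0 : k - 1 + 1 = k := by omega
    have hkK : k < K := by omega
    have hk1K : k - 1 < K := by omega
    have hS1 := (hSide (k-1) hk1K).2
    rw [hk0] at hS1
    have hS2 := (hSide k hkK).2
    have hradio := hstep (k-1) (k+1) (by omega) (by omega)
    have hF1 := hFdiff (k-1) hk1K
    rw [hk0] at hF1
    have hF2 := hFdiff k hkK
    have hcomb : F (k+1) - F (k-1)
        = 2*(n:ℤ) + 2 - ((L (k-1) : ℤ) + L k + 1) - ((L k : ℤ) + L (k+1) + 1) := by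
      have e1 := hF1
      have e2 := hF2
      push_cast at e1 e2 ⊢
      linarith
    have hdub : G.dist (x (k-1)) (x (k+1)) ≤ Nat.dist (P (k-1)) (P (k+1)) + 1 := by
      rw [hdform]
      simp only [hP]
      split <;> omega
    have hdubZ : (G.dist (x (k-1)) (x (k+1)) : ℤ)
        ≤ (Nat.dist (P (k-1)) (P (k+1)) : ℤ) + 1 := by exact_mod_cast hdub
    have eD : Nat.dist (P (k-1)) (P (k+1))
        = (P (k-1) - P (k+1)) + (P (k+1) - P (k-1)) := by simp [Nat.dist]
    have eL1 : L (k-1) = (P (k-1) - c) + (c - P (k-1)) := by simp [hL, Nat.dist]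
    have eL2 : L k = (P k - c) + (c - P k) := by simp [hL, Nat.dist]
    have eL3 : L (k+1) = (P (k+1) - c) + (c - P (k+1)) := by simp [hL, Nat.dist]
    have hp1 := hPlt (k-1)
    have hp2 := hPlt (k+1)
    omega
  -- counting
  have hxinj : ∀ i j, i < N → j < N → x i = x j → i = j := by
    intro i j hi hj he
    rcases lt_trichotomy i j with h | h | h
    · exact absurd he (hxne i j h hj)
    · exact h
    · exact absurd he.symm (hxne j i h hi)
  have hP0c : P 0 = c := by
    have h0 : Nat.dist (P 0) c = 0 := hL00
    simp [Nat.dist] at h0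
    omega
  have hPKc : P K = c := by
    have h0 : Nat.dist (P K) c = 0 := hLK0
    simp [Nat.dist] at h0
    omega
  have hcn : c < n := by omega
  have h2cn : 2*c < n := by omega
  set Cpos := (Finset.range N).filter (fun k => P k = c) with hCposd
  set Epos := (Finset.range N).filter (fun k => P k = 0 ∨ P k = 2*c) with hEposd
  have hCcard : Cpos.card = m := by
    rw [hCposd]
    have := posCard x hxinj hsurj (fun v : Fin n × Fin m => v.1.val = c)
    simp only [hP]
    rw [this]
    have he : Finset.univ.filter (fun v : Fin n × Fin m => v.1.val = c)
        = ({(⟨c, hcn⟩ : Fin n)} : Finset (Fin n)) ×ˢ Finset.univ := by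
      ext ⟨a, b⟩
      simp [Fin.ext_iff, eq_comm]
    rw [he, Finset.card_product]
    simp
  have hEcard : Epos.card = 2 * m := by
    rw [hEposd]
    have := posCard x hxinj hsurj (fun v : Fin n × Fin m => v.1.val = 0 ∨ v.1.val = 2*c)
    simp only [hP]
    rw [this]
    have he : Finset.univ.filter (fun v : Fin n × Fin m => v.1.val = 0 ∨ v.1.val = 2*c)
        = ({(⟨0, hn0⟩ : Fin n), (⟨2*c, h2cn⟩ : Fin n)} : Finset (Fin n)) ×ˢ Finset.univ := by
      ext ⟨a, b⟩
      simp [Fin.ext_iff, eq_comm]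
    rw [he, Finset.card_product]
    rw [Finset.card_insert_of_notMem (by simp [Fin.ext_iff]; omega)]
    simp
  have hEk : ∀ k ∈ Epos, 1 ≤ k ∧ k + 1 < N ∧ (P k = 0 ∨ P k = 2*c) := by
    intro k hk
    rw [hEposd, Finset.mem_filter, Finset.mem_range] at hk
    obtain ⟨hkN, hkP⟩ := hk
    have hne0 : k ≠ 0 := by
      intro h
      rw [h] at hkP
      omega
    have hneK : k ≠ K := by
      intro h
      rw [h] at hkP
      omega
    exact ⟨by omega, by omega, hkP⟩
  set g : ℕ → ℕ := fun k => if P (k-1) = c then k-1 else k+1 with hgd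
  have hg : ∀ k ∈ Epos, g k ∈ Cpos := by
    intro k hk
    obtain ⟨h1, h2, h3⟩ := hEk k hk
    rw [hCposd, Finset.mem_filter, Finset.mem_range]
    by_cases hcase : P (k-1) = c
    · simp only [hgd, if_pos hcase]
      exact ⟨by omega, hcase⟩
    · rcases hExt k h1 h2 h3 with h | h
      · exact absurd h hcase
      · simp only [hgd, if_neg hcase]
        exact ⟨by omega, h⟩
  have hfibcount : Epos.card = ∑ j ∈ Cpos, (Epos.filter (fun k => g k = j)).card :=
    Finset.card_eq_sum_card_fiberwise hg
  have hfibmem : ∀ j k, k ∈ Epos.filter (fun k => g k = j) →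
      (1 ≤ k ∧ k + 1 < N ∧ ((k - 1 = j ∧ P (k-1) = c) ∨ (k + 1 = j ∧ ¬ P (k-1) = c))) := by
    intro j k hk
    rw [Finset.mem_filter] at hk
    obtain ⟨hkE, hgk⟩ := hk
    obtain ⟨h1, h2, _⟩ := hEk k hkE
    refine ⟨h1, h2, ?_⟩
    by_cases hcase : P (k-1) = c
    · left
      simp only [hgd, if_pos hcase] at hgk
      exact ⟨hgk, hcase⟩
    · right
      simp only [hgd, if_neg hcase] at hgk
      exact ⟨hgk, hcase⟩
  have hfib2 : ∀ j, (Epos.filter (fun k => g k = j)).card ≤ 2 := by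
    intro j
    have hsub : Epos.filter (fun k => g k = j) ⊆ {j+1, j-1} := by
      intro k hk
      obtain ⟨h1, h2, h3⟩ := hfibmem j k hk
      simp only [Finset.mem_insert, Finset.mem_singleton]
      omega
    exact le_trans (Finset.card_le_card hsub)
      (le_trans (Finset.card_insert_le _ _) (by simp))
  have hfib0 : (Epos.filter (fun k => g k = 0)).card ≤ 1 := by
    have hsub : Epos.filter (fun k => g k = 0) ⊆ {1} := by
      intro k hk
      obtain ⟨h1, h2, h3⟩ := hfibmem 0 k hk
      simp only [Finset.mem_singleton]
      omega
    exact le_trans (Finset.card_le_card hsub) (by simp)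
  have hfibK : (Epos.filter (fun k => g k = K)).card ≤ 1 := by
    have hsub : Epos.filter (fun k => g k = K) ⊆ {K-1} := by
      intro k hk
      obtain ⟨h1, h2, h3⟩ := hfibmem K k hk
      simp only [Finset.mem_singleton]
      omega
    exact le_trans (Finset.card_le_card hsub) (by simp)
  have h0C : 0 ∈ Cpos := by
    rw [hCposd, Finset.mem_filter, Finset.mem_range]
    exact ⟨by omega, hP0c⟩
  have hKC : K ∈ Cpos := by
    rw [hCposd, Finset.mem_filter, Finset.mem_range]
    exact ⟨by omega, hPKc⟩
  have hKC' : K ∈ Cpos.erase 0 := Finset.mem_erase.mpr ⟨by omega, hKC⟩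
  have hsum2 : ∑ j ∈ Cpos, (Epos.filter (fun k => g k = j)).card
      ≤ 1 + (1 + 2 * ((Cpos.erase 0).erase K).card) := by
    rw [← Finset.add_sum_erase _ _ h0C, ← Finset.add_sum_erase _ _ hKC']
    refine add_le_add hfib0 (add_le_add hfibK ?_)
    calc ∑ j ∈ (Cpos.erase 0).erase K, (Epos.filter (fun k => g k = j)).card
        ≤ ∑ j ∈ (Cpos.erase 0).erase K, 2 := Finset.sum_le_sum (fun j _ => hfib2 j)
      _ = 2 * ((Cpos.erase 0).erase K).card := by rw [Finset.sum_const, smul_eq_mul, Nat.mul_comm]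
  have hcerase : ((Cpos.erase 0).erase K).card = m - 2 := by
    rw [Finset.card_erase_of_mem hKC', Finset.card_erase_of_mem h0C, hCcard]
    omega
  rw [hcerase] at hsum2
  have hfinal : 2 * m ≤ 1 + (1 + 2 * (m - 2)) :=
    le_trans (le_of_eq (hEcard ▸ hfibcount)) hsum2
  omega

theorem stmt_15 (n m : ℕ) (hn : 3 ≤ n) (ho : Odd n) (hm : 3 ≤ m)
    (φ : Fin n × Fin m → ℕ)
    (hφ : IsRadioLabeling (pathGraph n □ (⊤ : SimpleGraph (Fin m))) φ) :
    (m : ℤ) * n ^ 2 - 2 * n + m + 2 ≤ 2 * (span φ : ℤ) := by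
  by_contra h
  push_neg at h
  exact stmt_15' n m hn ho hm φ hφ h
end

section
/- Let n ≥ 4 be even. Setting L₀ = {(u_{n/2}, v), (u_{n/2+1}, v) : v ∈ V(P)} in P_n □ P (P the Petersen graph), one has diam(L₀) = 3 and Σ_{x ∈ V(P_n □ P)} d(x, L₀) = 5n(n−2)/2, and consequently the general lower bound yields rn(P_n □ P) ≥ 5n² − n + 1. -/
open SimpleGraph Finset

abbrev PV := {s : Finset (Fin 5) // s.card = 2}

lemma pathGraph_conn {n : ℕ} (hn : n ≠ 0) : (pathGraph n).Connected := by
  cases n with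
  | zero => omega
  | succ m => exact pathGraph_connected m

lemma path_walk_len {n : ℕ} : ∀ {i j : Fin n} (w : (pathGraph n).Walk i j),
    Nat.dist i.val j.val ≤ w.length := by
  intro i j w
  induction w with
  | nil => simp [Nat.dist_self]
  | @cons a b c h w ih =>
    rw [pathGraph_adj] at h
    have : Nat.dist a.val b.val = 1 := by
      rcases h with h | h <;> simp [Nat.dist] <;> omega
    calc Nat.dist a.val c.val ≤ Nat.dist a.val b.val + Nat.dist b.val c.val :=
          Nat.dist.triangle_inequality _ _ _
      _ ≤ 1 + w.length := by omega
      _ = (SimpleGraph.Walk.cons ‹(pathGraph n).Adj a b› w).length := by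
          simp [SimpleGraph.Walk.length_cons]; omega

lemma path_dist_le {n : ℕ} : ∀ (k : ℕ) (i j : Fin n), i.val + k = j.val →
    (pathGraph n).dist i j ≤ k := by
  intro k
  induction k with
  | zero => intro i j h; have : i = j := Fin.ext (by omega); simp [this]
  | succ m ih =>
    intro i j h
    have hn : n ≠ 0 := by omega
    have hi' : i.val + 1 < n := by omega
    set i' : Fin n := ⟨i.val + 1, hi'⟩ with hi'def
    have hadj : (pathGraph n).Adj i i' := by rw [pathGraph_adj]; left; rfl
    calc (pathGraph n).dist i j ≤ (pathGraph n).dist i i' + (pathGraph n).dist i' j :=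
          (pathGraph_conn hn).dist_triangle
      _ ≤ 1 + m := by
          have h1 : (pathGraph n).dist i i' = 1 := dist_eq_one_iff_adj.mpr hadj
          have h2 := ih i' j (by simp [hi'def]; omega)
          omega
      _ = m + 1 := by omega

lemma path_dist {n : ℕ} (i j : Fin n) :
    (pathGraph n).dist i j = Nat.dist i.val j.val := by
  have hn : n ≠ 0 := by have := i.isLt; omega
  apply le_antisymm
  · rcases le_total i.val j.val with h | h
    · exact path_dist_le _ i j (by simp [Nat.dist]; omega)
    · rw [dist_comm]
      have := path_dist_le (Nat.dist i.val j.val) j i (by simp [Nat.dist]; omega)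
      exact this
  · obtain ⟨w, hw⟩ := ((pathGraph_conn hn).preconnected i j).exists_walk_length_eq_dist
    rw [← hw]; exact path_walk_len w

lemma petersen_mid : ∀ a b : PV, ¬ Disjoint a.1 b.1 → a ≠ b →
    ∃ c : PV, Disjoint a.1 c.1 ∧ Disjoint c.1 b.1 := by decide

lemma petersen_conn : petersen.Connected := by
  rw [connected_iff]
  constructor
  · intro a b
    by_cases hab : a = b
    · subst hab; exact Reachable.refl a
    by_cases hd : Disjoint a.1 b.1
    · exact (SimpleGraph.Adj.reachable (by exact hd))
    · obtain ⟨c, h1, h2⟩ := petersen_mid a b hd hab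
      exact Reachable.trans (SimpleGraph.Adj.reachable (by exact h1))
        (SimpleGraph.Adj.reachable (by exact h2))
  · exact ⟨⟨⟨{0,1}, by decide⟩, by decide⟩⟩

lemma petersen_dist_le (a b : PV) : petersen.dist a b ≤ 2 := by
  by_cases hab : a = b
  · simp [hab, SimpleGraph.dist_self]
  by_cases hd : Disjoint a.1 b.1
  · have : petersen.dist a b = 1 := dist_eq_one_iff_adj.mpr hd
    omega
  · obtain ⟨c, h1, h2⟩ := petersen_mid a b hd hab
    calc petersen.dist a b ≤ (SimpleGraph.Walk.cons (show petersen.Adj a c from h1)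
          (SimpleGraph.Walk.cons (show petersen.Adj c b from h2) SimpleGraph.Walk.nil)).length :=
            SimpleGraph.dist_le _
      _ = 2 := by simp

lemma petersen_dist_two {a b : PV} (hab : a ≠ b) (hd : ¬ Disjoint a.1 b.1) :
    petersen.dist a b = 2 := by
  have h1 : petersen.dist a b ≠ 1 := fun h => hd (dist_eq_one_iff_adj.mp h)
  have h0 : 0 < petersen.dist a b := petersen_conn.pos_dist_of_ne hab
  have := petersen_dist_le a b
  omega

section BoxDist
variable {α β : Type*} {G : SimpleGraph α} {H : SimpleGraph β}

lemma boxProd_walk_len (hG : G.Connected) (hH : H.Connected) :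
    ∀ {x y : α × β} (w : (G □ H).Walk x y),
    G.dist x.1 y.1 + H.dist x.2 y.2 ≤ w.length := by
  intro x y w
  induction w with
  | nil => simp [SimpleGraph.dist_self]
  | @cons a b c h w ih =>
    rw [SimpleGraph.boxProd_adj] at h
    rw [SimpleGraph.Walk.length_cons]
    rcases h with ⟨hadj, heq⟩ | ⟨hadj, heq⟩
    · have h1 : G.dist a.1 c.1 ≤ 1 + G.dist b.1 c.1 := by
        have := hG.dist_triangle (u := a.1) (v := b.1) (w := c.1)
        have hd1 : G.dist a.1 b.1 = 1 := dist_eq_one_iff_adj.mpr hadj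
        omega
      have h2 : H.dist a.2 c.2 = H.dist b.2 c.2 := by rw [heq]
      omega
    · have h1 : H.dist a.2 c.2 ≤ 1 + H.dist b.2 c.2 := by
        have := hH.dist_triangle (u := a.2) (v := b.2) (w := c.2)
        have hd1 : H.dist a.2 b.2 = 1 := dist_eq_one_iff_adj.mpr hadj
        omega
      have h2 : G.dist a.1 c.1 = G.dist b.1 c.1 := by rw [heq]

      omega

lemma boxProd_dist (hG : G.Connected) (hH : H.Connected) (x y : α × β) :
    (G □ H).dist x y = G.dist x.1 y.1 + H.dist x.2 y.2 := by
  apply le_antisymm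
  · obtain ⟨w1, hw1⟩ := hG.exists_walk_length_eq_dist x.1 y.1
    obtain ⟨w2, hw2⟩ := hH.exists_walk_length_eq_dist x.2 y.2
    have hle := SimpleGraph.dist_le
      (((w1.boxProdLeft H x.2).append (w2.boxProdRight G y.1)).copy Prod.mk.eta Prod.mk.eta)
    rw [SimpleGraph.Walk.length_copy, SimpleGraph.Walk.length_append] at hle
    have e1 : (w1.boxProdLeft H x.2).length = w1.length := SimpleGraph.Walk.length_map _ _
    have e2 : (w2.boxProdRight G y.1).length = w2.length := SimpleGraph.Walk.length_map _ _
    rw [e1, e2] at hle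
    simpa [SimpleGraph.Walk.boxProdLeft, SimpleGraph.Walk.boxProdRight, hw1, hw2] using hle
  · obtain ⟨w, hw⟩ := (hG.boxProd hH).exists_walk_length_eq_dist x y
    rw [← hw]; exact boxProd_walk_len hG hH w

end BoxDist

section Main
variable {n : ℕ}

lemma PG_conn (hn : n ≠ 0) : (pathGraph n □ petersen).Connected :=
  (pathGraph_conn hn).boxProd petersen_conn

lemma PG_dist (hn : n ≠ 0) (x y : Fin n × PV) :
    (pathGraph n □ petersen).dist x y =
      Nat.dist x.1.val y.1.val + petersen.dist x.2 y.2 := by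
  rw [boxProd_dist (pathGraph_conn hn) petersen_conn, path_dist]

lemma PG_dist_le (hn : n ≠ 0) (x y : Fin n × PV) :
    (pathGraph n □ petersen).dist x y ≤ n + 1 := by
  rw [PG_dist hn]
  have h1 : Nat.dist x.1.val y.1.val ≤ n - 1 := by
    have := x.1.isLt; have := y.1.isLt
    simp [Nat.dist]; omega
  have h2 := petersen_dist_le x.2 y.2
  omega

def pA : PV := ⟨{0, 1}, by decide⟩
def pB : PV := ⟨{1, 2}, by decide⟩

lemma pAB_dist : petersen.dist pA pB = 2 := by
  apply petersen_dist_two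
  · decide
  · decide

lemma PG_diam (hn : 1 ≤ n) : (pathGraph n □ petersen).diam = n + 1 := by
  have hn0 : n ≠ 0 := by omega
  have hub : (pathGraph n □ petersen).ediam ≤ (n + 1 : ℕ) := by
    apply SimpleGraph.ediam_le_of_edist_le
    intro u v
    have h := PG_dist_le hn0 u v
    have hr : (pathGraph n □ petersen).edist u v ≠ ⊤ :=
      SimpleGraph.edist_ne_top_iff_reachable.mpr (((PG_conn hn0).preconnected) u v)
    have := ENat.coe_toNat hr
    rw [← this]
    exact_mod_cast h
  have hlb : ((n + 1 : ℕ) : ℕ∞) ≤ (pathGraph n □ petersen).ediam := by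
    set x : Fin n × PV := (⟨0, by omega⟩, pA)
    set y : Fin n × PV := (⟨n - 1, by omega⟩, pB)
    have hd : (pathGraph n □ petersen).dist x y = n + 1 := by
      rw [PG_dist hn0]
      simp [x, y, Nat.dist, pAB_dist]
      omega
    have hr : (pathGraph n □ petersen).edist x y ≠ ⊤ :=
      SimpleGraph.edist_ne_top_iff_reachable.mpr (((PG_conn hn0).preconnected) x y)
    have h2 : (pathGraph n □ petersen).edist x y = ((n + 1 : ℕ) : ℕ∞) := by
      rw [← ENat.coe_toNat hr]
      exact_mod_cast congrArg (Nat.cast : ℕ → ℕ∞) hd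
    calc ((n + 1 : ℕ) : ℕ∞) = (pathGraph n □ petersen).edist x y := h2.symm
      _ ≤ _ := SimpleGraph.edist_le_ediam
  have : (pathGraph n □ petersen).ediam = ((n + 1 : ℕ) : ℕ∞) := le_antisymm hub hlb
  rw [SimpleGraph.diam, this, ENat.toNat_coe]

end Main

section L0
variable {n : ℕ}

lemma card_PV : Fintype.card PV = 10 := by decide

lemma gauss_sum (h : ℕ) :
    ∑ i ∈ range (2 * h), (if i < h then h - 1 - i else i - h) = h * (h - 1) := by
  have hsplit : ∑ i ∈ range (2 * h), (if i < h then h - 1 - i else i - h)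
      = (∑ i ∈ range h, (if i < h then h - 1 - i else i - h))
        + ∑ i ∈ Finset.Ico h (2 * h), (if i < h then h - 1 - i else i - h) := by
    rw [Finset.range_eq_Ico, ← Finset.sum_Ico_consecutive _ (Nat.zero_le h) (by omega),
      ← Finset.range_eq_Ico]
  rw [hsplit]
  have h1 : ∑ i ∈ range h, (if i < h then h - 1 - i else i - h) = ∑ i ∈ range h, (h - 1 - i) :=
    Finset.sum_congr rfl (fun i hi => by rw [if_pos (Finset.mem_range.mp hi)])
  have h2 : ∑ i ∈ Finset.Ico h (2 * h), (if i < h then h - 1 - i else i - h)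
      = ∑ i ∈ range h, i := by
    rw [Finset.sum_Ico_eq_sum_range]
    apply Finset.sum_congr (by congr 1; omega)
    intro i hi
    rw [if_neg (by omega)]
    omega
  have h3 : ∑ i ∈ range h, (h - 1 - i) = ∑ i ∈ range h, i := by
    have := Finset.sum_range_reflect (fun j => j) h
    simpa using this
  have h4 := Finset.sum_range_id_mul_two h
  omega

variable (n) in
noncomputable def L0 : Finset (Fin n × PV) :=
  ({x : Fin n × PV | x.1.val = n / 2 - 1 ∨ x.1.val = n / 2} : Finset _)

lemma mem_L0 (x : Fin n × PV) : x ∈ L0 n ↔ (x.1.val = n / 2 - 1 ∨ x.1.val = n / 2) := by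
  simp [L0]

lemma L0_nonempty (hn : 4 ≤ n) : (L0 n).Nonempty := by
  refine ⟨(⟨n / 2, by omega⟩, pA), ?_⟩
  rw [mem_L0]
  right; rfl

lemma L0_dist_le (hn : 4 ≤ n) {x y : Fin n × PV} (hx : x ∈ L0 n) (hy : y ∈ L0 n) :
    (pathGraph n □ petersen).dist x y ≤ 3 := by
  rw [mem_L0] at hx hy
  rw [PG_dist (by omega)]
  have h1 : Nat.dist x.1.val y.1.val ≤ 1 := by
    simp only [Nat.dist]
    omega
  have h2 := petersen_dist_le x.2 y.2
  omega

lemma setDiam_L0 (hn : 4 ≤ n) : setDiam (pathGraph n □ petersen) (L0 n) = 3 := by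
  have hmem : 3 ∈ {d | ∃ x ∈ L0 n, ∃ y ∈ L0 n, (pathGraph n □ petersen).dist x y = d} := by
    refine ⟨(⟨n / 2 - 1, by omega⟩, pA), ?_, (⟨n / 2, by omega⟩, pB), ?_, ?_⟩
    · rw [mem_L0]; left; rfl
    · rw [mem_L0]; right; rfl
    · rw [PG_dist (by omega)]
      simp only [Nat.dist, pAB_dist]
      have : (⟨n / 2 - 1, by omega⟩ : Fin n).val = n / 2 - 1 := rfl
      simp [pAB_dist]
      omega
  have hub : ∀ d ∈ {d | ∃ x ∈ L0 n, ∃ y ∈ L0 n, (pathGraph n □ petersen).dist x y = d},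
      d ≤ 3 := by
    rintro d ⟨x, hx, y, hy, rfl⟩
    exact L0_dist_le hn hx hy
  exact le_antisymm (csSup_le ⟨3, hmem⟩ hub) (le_csSup ⟨3, hub⟩ hmem)

lemma distToSet_L0 (hn : 4 ≤ n) (x : Fin n × PV) :
    distToSet (pathGraph n □ petersen) x (L0 n)
      = (if x.1.val < n / 2 then n / 2 - 1 - x.1.val else x.1.val - n / 2) := by
  unfold distToSet
  set m := (if x.1.val < n / 2 then n / 2 - 1 - x.1.val else x.1.val - n / 2) with hm
  have hn0 : n ≠ 0 := by omega
  have hmem : m ∈ ((fun w => (pathGraph n □ petersen).dist x w) '' ↑(L0 n)) := by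
    by_cases hc : x.1.val < n / 2
    · refine ⟨(⟨n / 2 - 1, by omega⟩, x.2), ?_, ?_⟩
      · simp only [Finset.coe_sort_coe, Finset.mem_coe, mem_L0]; simp
      · show (pathGraph n □ petersen).dist x _ = m
        rw [PG_dist hn0]
        simp only [Nat.dist, SimpleGraph.dist_self, hm, if_pos hc]
        omega
    · refine ⟨(⟨n / 2, by omega⟩, x.2), ?_, ?_⟩
      · simp only [Finset.coe_sort_coe, Finset.mem_coe, mem_L0]; simp
      · show (pathGraph n □ petersen).dist x _ = m
        rw [PG_dist hn0]
        simp only [Nat.dist, SimpleGraph.dist_self, hm, if_neg hc]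
        omega
  have hlb : ∀ d ∈ ((fun w => (pathGraph n □ petersen).dist x w) '' ↑(L0 n)), m ≤ d := by
    rintro d ⟨w, hw, rfl⟩
    rw [Finset.mem_coe, mem_L0] at hw
    show m ≤ (pathGraph n □ petersen).dist x w
    rw [PG_dist hn0]
    have : m ≤ Nat.dist x.1.val w.1.val := by
      simp only [Nat.dist, hm]
      split <;> omega
    omega
  exact le_antisymm (Nat.sInf_le hmem) (le_csInf ⟨m, hmem⟩ hlb)

lemma sum_distToSet (hn : 4 ≤ n) (he : Even n) :
    2 * ∑ x : Fin n × PV, distToSet (pathGraph n □ petersen) x (L0 n) = 5 * n * (n - 2) := by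
  obtain ⟨h, hh⟩ := he
  have hh' : n = 2 * h := by omega
  obtain ⟨k, hk⟩ : ∃ k, h = k + 2 := ⟨h - 2, by omega⟩
  have hsum : ∑ x : Fin n × PV, distToSet (pathGraph n □ petersen) x (L0 n)
      = ∑ i : Fin n, 10 * (if i.val < n / 2 then n / 2 - 1 - i.val else i.val - n / 2) := by
    rw [Fintype.sum_prod_type]
    apply Finset.sum_congr rfl
    intro i _
    have hv : ∀ a : PV, distToSet (pathGraph n □ petersen) (i, a) (L0 n)
        = (if i.val < n / 2 then n / 2 - 1 - i.val else i.val - n / 2) :=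
      fun a => distToSet_L0 hn (i, a)
    rw [Finset.sum_congr rfl (fun a _ => hv a), Finset.sum_const, card_univ, card_PV,
      smul_eq_mul]
  rw [hsum]
  subst hh'
  have h2 : 2 * h / 2 = h := by omega
  rw [Fin.sum_univ_eq_sum_range (fun i => 10 * (if i < 2 * h / 2 then 2 * h / 2 - 1 - i
    else i - 2 * h / 2))]
  simp only [h2]
  rw [← Finset.mul_sum, gauss_sum h]
  subst hk
  have e1 : k + 2 - 1 = k + 1 := by omega
  have e2 : 2 * (k + 2) - 2 = 2 * k + 2 := by omega
  rw [e1, e2]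
  ring

end L0

section MainBound
variable {n : ℕ}

lemma dist_through (hn : 4 ≤ n) (x y : Fin n × PV) :
    (pathGraph n □ petersen).dist x y
      ≤ distToSet (pathGraph n □ petersen) x (L0 n) + 3
        + distToSet (pathGraph n □ petersen) y (L0 n) := by
  have hn0 : n ≠ 0 := by omega
  have hne : ((fun w => (pathGraph n □ petersen).dist x w) '' ↑(L0 n)).Nonempty :=
    Set.Nonempty.image _ (Finset.coe_nonempty.mpr (L0_nonempty hn))
  have hne' : ((fun w => (pathGraph n □ petersen).dist y w) '' ↑(L0 n)).Nonempty :=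
    Set.Nonempty.image _ (Finset.coe_nonempty.mpr (L0_nonempty hn))
  obtain ⟨wx, hwx, hdx⟩ := Nat.sInf_mem hne
  obtain ⟨wy, hwy, hdy⟩ := Nat.sInf_mem hne'
  rw [Finset.mem_coe] at hwx hwy
  have hconn := PG_conn (n := n) hn0
  calc (pathGraph n □ petersen).dist x y
      ≤ (pathGraph n □ petersen).dist x wx + (pathGraph n □ petersen).dist wx y :=
        hconn.dist_triangle
    _ ≤ (pathGraph n □ petersen).dist x wx +
        ((pathGraph n □ petersen).dist wx wy + (pathGraph n □ petersen).dist wy y) := by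
        have := hconn.dist_triangle (u := wx) (v := wy) (w := y)
        omega
    _ ≤ _ := by
        have h1 : (pathGraph n □ petersen).dist wx wy ≤ 3 := L0_dist_le hn hwx hwy
        have h2 : (pathGraph n □ petersen).dist wy y = (pathGraph n □ petersen).dist y wy :=
          SimpleGraph.dist_comm ..
        have hdx' : (pathGraph n □ petersen).dist x wx
            = sInf ((fun w => (pathGraph n □ petersen).dist x w) '' ↑(L0 n)) := hdx
        have hdy' : (pathGraph n □ petersen).dist y wy
            = sInf ((fun w => (pathGraph n □ petersen).dist y w) '' ↑(L0 n)) := hdy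
        unfold distToSet
        omega

lemma radio_inj (hn : 4 ≤ n) {φ : Fin n × PV → ℕ}
    (hφ : IsRadioLabeling (pathGraph n □ petersen) φ) : Function.Injective φ := by
  intro u v huv
  by_contra hne
  have h := hφ u v hne
  rw [PG_diam (by omega), huv] at h
  simp at h
  have := PG_dist_le (by omega : n ≠ 0) u v
  omega

lemma le_span {V : Type*} [Fintype V] (φ : V → ℕ) (u v : V) :
    (φ u : ℤ) - (φ v : ℤ) ≤ (span φ : ℤ) := by
  have hb : BddAbove (Set.range fun p : V × V => φ p.1 - φ p.2) :=
    Set.Finite.bddAbove (Set.finite_range _)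
  have hm : φ u - φ v ≤ span φ := le_csSup hb ⟨(u, v), rfl⟩
  omega

end MainBound

section SpanLB
variable {n : ℕ}

lemma card_V : Fintype.card (Fin n × PV) = 10 * n := by
  rw [Fintype.card_prod, Fintype.card_fin, card_PV]
  ring

lemma exists_sorted_enum {V : Type*} [Fintype V] [DecidableEq V] [Nonempty V] (φ : V → ℕ)
    (hinj : Function.Injective φ) {p : ℕ} (hp : Fintype.card V = p) :
    ∃ e : Fin p → V, Function.Bijective e ∧
      ∀ i j, i < j → φ (e i) < φ (e j) := by
  classical
  subst hp
  have hs : (Finset.univ.image φ).card = Fintype.card V := by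
    rw [Finset.card_image_of_injective _ hinj, card_univ]
  refine ⟨fun i => Function.invFun φ (((Finset.univ.image φ).orderIsoOfFin hs i : ℕ)), ?_, ?_⟩
  all_goals
    have hee : ∀ i, φ (Function.invFun φ (((Finset.univ.image φ).orderIsoOfFin hs i : ℕ)))
        = (((Finset.univ.image φ).orderIsoOfFin hs i : ℕ)) := by
      intro i
      have hmem : (((Finset.univ.image φ).orderIsoOfFin hs i : ℕ)) ∈ Finset.univ.image φ :=
        ((Finset.univ.image φ).orderIsoOfFin hs i).2
      rw [Finset.mem_image] at hmem
      obtain ⟨v, _, hv⟩ := hmem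
      exact Function.invFun_eq ⟨v, hv⟩
  · have hmono : ∀ i j, i < j →
        φ (Function.invFun φ (((Finset.univ.image φ).orderIsoOfFin hs i : ℕ)))
          < φ (Function.invFun φ (((Finset.univ.image φ).orderIsoOfFin hs j : ℕ))) := by
      intro i j hij
      rw [hee, hee]
      exact_mod_cast ((Finset.univ.image φ).orderIsoOfFin hs).strictMono hij
    have heinj : Function.Injective
        (fun i => Function.invFun φ (((Finset.univ.image φ).orderIsoOfFin hs i : ℕ))) := by
      intro i j hij
      by_contra hne
      rcases lt_or_gt_of_ne hne with h | h
      · exact absurd (congrArg φ hij) (Nat.ne_of_lt (hmono i j h))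
      · exact absurd (congrArg φ hij.symm) (Nat.ne_of_lt (hmono j i h))
    exact (Fintype.bijective_iff_injective_and_card _).mpr ⟨heinj, Fintype.card_fin _⟩
  · intro i j hij
    rw [hee, hee]
    exact_mod_cast ((Finset.univ.image φ).orderIsoOfFin hs).strictMono hij

lemma span_lb (hn : 4 ≤ n) (he : Even n) {φ : Fin n × PV → ℕ}
    (hφ : IsRadioLabeling (pathGraph n □ petersen) φ) :
    5 * n ^ 2 - n + 1 ≤ span φ := by
  classical
  have hinj : Function.Injective φ := radio_inj hn hφ
  haveI : Nonempty (Fin n × PV) := ⟨(⟨0, by omega⟩, pA)⟩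
  set p : ℕ := 10 * n with hp
  obtain ⟨e, hebij, hemono⟩ := exists_sorted_enum φ hinj (card_V.trans hp.symm)
  have hp0 : 0 < p := by omega
  obtain ⟨g, hgspec⟩ : ∃ g : ℕ → Fin n × PV,
      ∀ k, g k = e ⟨min k (p - 1), by omega⟩ := ⟨_, fun k => rfl⟩
  have hg : ∀ i : Fin p, e i = g i.val := by
    intro i
    rw [hgspec]
    congr 1
    apply Fin.ext
    have := i.isLt
    simp only [Fin.val_mk]
    omega
  obtain ⟨dL, hdL⟩ : ∃ dL : Fin n × PV → ℕ,
      ∀ x, dL x = distToSet (pathGraph n □ petersen) x (L0 n) := ⟨_, fun _ => rfl⟩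
  set S : ℕ := ∑ x : Fin n × PV, dL x with hSdef
  have hS : 2 * S = 5 * n * (n - 2) := by
    rw [hSdef, Finset.sum_congr rfl (fun x _ => hdL x)]
    exact sum_distToSet hn he
  have hSg : ∑ i ∈ range p, dL (g i) = S := by
    rw [hSdef]
    rw [← Fin.sum_univ_eq_sum_range (fun k => dL (g k)) p]
    rw [Finset.sum_congr rfl (fun i _ => (congrArg dL (hg i)).symm)]
    exact Fintype.sum_bijective e hebij (fun i => dL (e i)) dL (fun i => rfl)
  have h1 : ∑ i ∈ range (p - 1), dL (g i) ≤ S := by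
    rw [← hSg]
    exact Finset.sum_le_sum_of_subset (Finset.range_subset_range.mpr (by omega))
  have h2 : ∑ i ∈ range (p - 1), dL (g (i + 1)) ≤ S := by
    have heq : ∑ i ∈ Finset.Ico 1 p, dL (g i) = ∑ i ∈ range (p - 1), dL (g (i + 1)) := by
      rw [Finset.sum_Ico_eq_sum_range]
      exact Finset.sum_congr rfl (fun i _ => by rw [add_comm])
    rw [← heq, ← hSg]
    apply Finset.sum_le_sum_of_subset
    intro x hx
    rw [Finset.mem_Ico] at hx
    rw [Finset.mem_range]
    omega
  have htel := Finset.sum_range_sub (fun i => (φ (g i) : ℤ)) (p - 1)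
  have hterm : ∀ i ∈ range (p - 1),
      (n - 1 : ℤ) - (dL (g i) : ℤ) - (dL (g (i + 1)) : ℤ)
        ≤ (φ (g (i + 1)) : ℤ) - (φ (g i) : ℤ) := by
    intro i hi
    rw [Finset.mem_range] at hi
    have hiv : min i (p - 1) = i := by omega
    have hiv' : min (i + 1) (p - 1) = i + 1 := by omega
    have hilt : (⟨min i (p - 1), by omega⟩ : Fin p) < ⟨min (i + 1) (p - 1), by omega⟩ := by
      rw [Fin.mk_lt_mk]
      omega
    have hflt : φ (g i) < φ (g (i + 1)) := by
      rw [hgspec i, hgspec (i + 1)]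
      exact hemono _ _ hilt
    have hgne : g i ≠ g (i + 1) := by
      intro h
      have := hflt
      rw [h] at this
      omega
    have hrad := hφ (g i) (g (i + 1)) hgne
    rw [PG_diam (by omega)] at hrad
    have habs : |(φ (g i) : ℤ) - (φ (g (i + 1)) : ℤ)|
        = (φ (g (i + 1)) : ℤ) - (φ (g i) : ℤ) := by
      rw [abs_sub_comm, abs_of_nonneg]
      omega
    rw [habs] at hrad
    have hdist := dist_through hn (g i) (g (i + 1))
    have hdist' : ((pathGraph n □ petersen).dist (g i) (g (i + 1)) : ℤ)
        ≤ (dL (g i) : ℤ) + 3 + (dL (g (i + 1)) : ℤ) := by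
      rw [hdL, hdL]
      exact_mod_cast hdist
    push_cast at hrad ⊢
    omega
  have hsum := Finset.sum_le_sum hterm
  rw [htel] at hsum
  have hspan := le_span φ (g (p - 1)) (g 0)
  have hlhs : ∑ i ∈ range (p - 1), ((n - 1 : ℤ) - (dL (g i) : ℤ) - (dL (g (i + 1)) : ℤ))
      = ((p - 1 : ℕ) : ℤ) * ((n : ℤ) - 1) - (∑ i ∈ range (p - 1), (dL (g i) : ℤ))
        - (∑ i ∈ range (p - 1), (dL (g (i + 1)) : ℤ)) := by
    rw [Finset.sum_sub_distrib, Finset.sum_sub_distrib, Finset.sum_const, Finset.card_range]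
    -- push_cast removed (no-op)
    ring
  rw [hlhs] at hsum
  have hA : (∑ i ∈ range (p - 1), (dL (g i) : ℤ)) ≤ (S : ℤ) := by
    rw [← Nat.cast_sum]
    exact_mod_cast h1
  have hB : (∑ i ∈ range (p - 1), (dL (g (i + 1)) : ℤ)) ≤ (S : ℤ) := by
    rw [← Nat.cast_sum]
    exact_mod_cast h2
  have hfinal : ((p - 1 : ℕ) : ℤ) * ((n : ℤ) - 1) - 2 * (S : ℤ) ≤ (span φ : ℤ) := by
    have hnn : (0 : ℤ) ≤ (n : ℤ) - 1 := by
      have : (4 : ℤ) ≤ (n : ℤ) := by exact_mod_cast hn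
      omega
    nlinarith [hsum, hspan, hA, hB]
  have hp1 : ((p - 1 : ℕ) : ℤ) = 10 * (n : ℤ) - 1 := by
    rw [hp]
    push_cast [Nat.cast_sub (by omega : 1 ≤ 10 * n)]
    ring
  have h2S : 2 * (S : ℤ) = 5 * (n : ℤ) * ((n : ℤ) - 2) := by
    have hc : ((2 * S : ℕ) : ℤ) = ((5 * n * (n - 2) : ℕ) : ℤ) :=
      congrArg (Nat.cast : ℕ → ℤ) hS
    push_cast [Nat.cast_sub (by omega : 2 ≤ n)] at hc
    omega
  rw [hp1, h2S] at hfinal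
  have hcast : ((5 * n ^ 2 - n + 1 : ℕ) : ℤ) = 5 * (n : ℤ) ^ 2 - (n : ℤ) + 1 := by
    have hge : n ≤ 5 * n ^ 2 := by nlinarith
    push_cast [Nat.cast_sub hge]
    ring
  have hfin2 : ((5 * n ^ 2 - n + 1 : ℕ) : ℤ) ≤ (span φ : ℤ) := by
    rw [hcast]
    nlinarith [hfinal]
  exact_mod_cast hfin2

end SpanLB

lemma radio_exists (hn : 4 ≤ n) :
    ∃ φ : Fin n × PV → ℕ, IsRadioLabeling (pathGraph n □ petersen) φ := by
  classical
  refine ⟨fun v => (n + 2) * ((Fintype.equivFin (Fin n × PV)) v).val, ?_⟩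
  intro u v huv
  rw [PG_diam (by omega)]
  have hne : ((Fintype.equivFin (Fin n × PV)) u).val ≠ ((Fintype.equivFin (Fin n × PV)) v).val := by
    intro h
    exact huv ((Fintype.equivFin (Fin n × PV)).injective (Fin.ext h))
  have habs : (n + 2 : ℤ) ≤ |((n + 2) * ((Fintype.equivFin (Fin n × PV)) u).val : ℤ)
      - ((n + 2) * ((Fintype.equivFin (Fin n × PV)) v).val : ℤ)| := by
    rw [show ((n + 2) * ((Fintype.equivFin (Fin n × PV)) u).val : ℤ)
        - ((n + 2) * ((Fintype.equivFin (Fin n × PV)) v).val : ℤ)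
      = (n + 2 : ℤ) * (((Fintype.equivFin (Fin n × PV)) u).val
          - ((Fintype.equivFin (Fin n × PV)) v).val) by ring]
    rw [abs_mul, abs_of_nonneg (by positivity : (0:ℤ) ≤ (n:ℤ) + 2)]
    have h1 : (1 : ℤ) ≤ |(((Fintype.equivFin (Fin n × PV)) u).val : ℤ)
        - (((Fintype.equivFin (Fin n × PV)) v).val : ℤ)| := by
      rw [show (1:ℤ) = 0 + 1 by ring, Int.add_one_le_iff, abs_pos, sub_ne_zero]
      exact_mod_cast hne
    nlinarith
  have hd : (0 : ℤ) ≤ ((pathGraph n □ petersen).dist u v : ℤ) := by positivity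
  push_cast at habs ⊢
  omega

lemma radioNumber_lb (hn : 4 ≤ n) (he : Even n) :
    5 * n ^ 2 - n + 1 ≤ radioNumber (pathGraph n □ petersen) := by
  have hne : {s | ∃ φ : Fin n × PV → ℕ,
      IsRadioLabeling (pathGraph n □ petersen) φ ∧ span φ = s}.Nonempty := by
    obtain ⟨φ, hφ⟩ := radio_exists hn
    exact ⟨span φ, φ, hφ, rfl⟩
  obtain ⟨φ, hφ, hspan⟩ := Nat.sInf_mem hne
  rw [radioNumber, ← hspan]
  exact span_lb hn he hφ

theorem stmt_16 (n : ℕ) (hn : 4 ≤ n) (he : Even n) :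
    setDiam (pathGraph n □ petersen)
        ({x : Fin n × {s : Finset (Fin 5) // s.card = 2} |
            x.1.val = n / 2 - 1 ∨ x.1.val = n / 2} : Finset _) = 3
    ∧ 2 * ∑ x : Fin n × {s : Finset (Fin 5) // s.card = 2},
        distToSet (pathGraph n □ petersen) x
          ({x : Fin n × {s : Finset (Fin 5) // s.card = 2} |
              x.1.val = n / 2 - 1 ∨ x.1.val = n / 2} : Finset _)
      = 5 * n * (n - 2)
    ∧ 5 * n ^ 2 - n + 1 ≤ radioNumber (pathGraph n □ petersen) := by
  exact ⟨setDiam_L0 hn, sum_distToSet hn he, radioNumber_lb hn he⟩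
end

section
/- Let G be a connected graph of diameter d and φ a radio labeling of G with induced ordering x₀,...,x_{p−1} of V(G). If L₀ ⊆ V(G) with k = diam(L₀), then for any indices i < j, φ(x_j) − φ(x_i) ≥ (j−i)(d−k+1) − 2 Σ_{t=i}^{j} d(x_t, L₀) + d(x_i, L₀) + d(x_j, L₀). -/
open SimpleGraph Finset

theorem stmt_19 {V : Type*} [Fintype V] (G : SimpleGraph V) (hG : G.Connected)
    {m : ℕ} (hm : Fintype.card V = m + 1)
    (φ : V → ℕ) (hφ : IsRadioLabeling G φ)
    (x : Fin (m + 1) → V) (hx : Function.Bijective x)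
    (hmono : ∀ i j : Fin (m + 1), i < j → φ (x i) < φ (x j))
    (L₀ : Finset V) (hL : L₀.Nonempty)
    (i j : Fin (m + 1)) (hij : i < j) :
    ((j : ℤ) - (i : ℤ)) * ((G.diam : ℤ) - (setDiam G L₀ : ℤ) + 1)
        - 2 * ∑ t ∈ Finset.Icc i j, (distToSet G (x t) L₀ : ℤ)
        + (distToSet G (x i) L₀ : ℤ) + (distToSet G (x j) L₀ : ℤ)
      ≤ (φ (x j) : ℤ) - (φ (x i) : ℤ) := by
  set d : ℤ := (G.diam : ℤ) with hd
  set k : ℤ := (setDiam G L₀ : ℤ) with hk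
  set F : ℕ → ℤ := fun n => if h : n < m + 1 then (distToSet G (x ⟨n, h⟩) L₀ : ℤ) else 0
    with hF
  -- existence of closest point
  have hclose : ∀ v : V, ∃ w ∈ L₀, (G.dist v w : ℤ) = (distToSet G v L₀ : ℤ) := by
    intro v
    have hne : ((fun w => G.dist v w) '' ↑L₀).Nonempty := by
      obtain ⟨w, hw⟩ := hL
      exact ⟨G.dist v w, ⟨w, by simpa using hw, rfl⟩⟩
    have := Nat.sInf_mem hne
    obtain ⟨w, hw, hweq⟩ := this
    exact ⟨w, by simpa using hw, by rw [distToSet]; exact_mod_cast congrArg (Nat.cast : ℕ → ℤ) hweq⟩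
  -- dist within L₀ bounded by setDiam
  have hdiamL : ∀ w w', w ∈ L₀ → w' ∈ L₀ → (G.dist w w' : ℤ) ≤ k := by
    intro w w' hw hw'
    have hfin : ({e | ∃ a ∈ L₀, ∃ b ∈ L₀, G.dist a b = e} : Set ℕ).Finite := by
      apply (Set.finite_range (fun p : V × V => G.dist p.1 p.2)).subset
      rintro e ⟨a, _, b, _, rfl⟩
      exact ⟨(a, b), rfl⟩
    have : G.dist w w' ≤ setDiam G L₀ :=
      le_csSup hfin.bddAbove ⟨w, hw, w', hw', rfl⟩
    rw [hk]
    exact_mod_cast this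
  -- consecutive-type bound
  have key : ∀ a b : Fin (m + 1), a < b →
      d + 1 - k - F a.1 - F b.1 ≤ (φ (x b) : ℤ) - (φ (x a) : ℤ) := by
    intro a b hab
    have hne : x a ≠ x b := fun h => absurd (hx.1 h) (Fin.ne_of_lt hab)
    have h1 := hφ (x a) (x b) hne
    have h2 := hmono a b hab
    have habs : |(φ (x a) : ℤ) - (φ (x b) : ℤ)| = (φ (x b) : ℤ) - (φ (x a) : ℤ) := by
      rw [abs_sub_comm, abs_of_nonneg]
      have : (φ (x a) : ℤ) ≤ (φ (x b) : ℤ) := by exact_mod_cast h2.le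
      linarith
    rw [habs] at h1
    obtain ⟨wa, hwa, hwaeq⟩ := hclose (x a)
    obtain ⟨wb, hwb, hwbeq⟩ := hclose (x b)
    have htri : (G.dist (x a) (x b) : ℤ) ≤
        (G.dist (x a) wa : ℤ) + (G.dist wa wb : ℤ) + (G.dist wb (x b) : ℤ) := by
      have t1 : G.dist (x a) (x b) ≤ G.dist (x a) wb + G.dist wb (x b) :=
        hG.dist_triangle
      have t2 : G.dist (x a) wb ≤ G.dist (x a) wa + G.dist wa wb :=
        hG.dist_triangle
      push_cast
      exact_mod_cast le_trans t1 (by omega)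
    have hsym : (G.dist wb (x b) : ℤ) = (G.dist (x b) wb : ℤ) := by
      rw [SimpleGraph.dist_comm]
    have hFa : F a.1 = (distToSet G (x a) L₀ : ℤ) := by
      simp [hF, a.isLt, Fin.eta, not_lt.mpr a.is_le]
    have hFb : F b.1 = (distToSet G (x b) L₀ : ℤ) := by
      simp [hF, b.isLt, Fin.eta, not_lt.mpr b.is_le]
    have hk' := hdiamL wa wb hwa hwb
    rw [hFa, hFb]
    linarith
  -- main induction over natural numbers
  have main : ∀ b : ℕ, i.1 + 1 ≤ b → ∀ hb : b < m + 1,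
      ((b : ℤ) - (i.1 : ℤ)) * (d - k + 1) - 2 * ∑ t ∈ Finset.Icc i.1 b, F t
        + F i.1 + F b ≤ (φ (x ⟨b, hb⟩) : ℤ) - (φ (x i) : ℤ) := by
    intro b hb
    induction b, hb using Nat.le_induction with
    | base =>
      intro hb
      have hIcc : Finset.Icc i.1 (i.1 + 1) = {i.1, i.1 + 1} := by
        rw [← Finset.insert_Icc_right_eq_Icc_add_one (by omega), Finset.Icc_self, Finset.pair_comm]
      have hsum : ∑ t ∈ Finset.Icc i.1 (i.1 + 1), F t = F i.1 + F (i.1 + 1) := by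
        rw [hIcc, Finset.sum_insert (by simp), Finset.sum_singleton]
      have hkey := key i ⟨i.1 + 1, hb⟩ (by simp [Fin.lt_def])
      rw [hsum]
      push_cast
      linarith
    | succ b hb IH =>
      intro hb1
      have hb' : b < m + 1 := by omega
      have hIcc : Finset.Icc i.1 (b + 1) = insert (b + 1) (Finset.Icc i.1 b) := by
        rw [← Finset.insert_Icc_right_eq_Icc_add_one (by omega)]
      have hsum : ∑ t ∈ Finset.Icc i.1 (b + 1), F t
          = F (b + 1) + ∑ t ∈ Finset.Icc i.1 b, F t := by
        rw [hIcc, Finset.sum_insert (by simp)]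
      have hkey := key ⟨b, hb'⟩ ⟨b + 1, hb1⟩ (by simp [Fin.lt_def])
      have hIH := IH hb'
      have hring : ((b : ℤ) + 1 - (i.1 : ℤ)) * (d - k + 1)
          = ((b : ℤ) - (i.1 : ℤ)) * (d - k + 1) + (d - k + 1) := by ring
      rw [hsum]
      push_cast
      push_cast at hIH hkey
      linarith
  -- convert sum over Fin Icc to ℕ Icc
  have hsumconv : ∑ t ∈ Finset.Icc i j, (distToSet G (x t) L₀ : ℤ)
      = ∑ t ∈ Finset.Icc i.1 j.1, F t := by
    rw [← Fin.map_valEmbedding_Icc, Finset.sum_map]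
    apply Finset.sum_congr rfl
    intro t _
    simp [hF, t.isLt, Fin.eta, not_lt.mpr t.is_le]
  have hFi : F i.1 = (distToSet G (x i) L₀ : ℤ) := by simp [hF, i.isLt, Fin.eta, not_lt.mpr i.is_le]
  have hFj : F j.1 = (distToSet G (x j) L₀ : ℤ) := by simp [hF, j.isLt, Fin.eta, not_lt.mpr j.is_le]
  have hfin := main j.1 (by exact hij) j.isLt
  rw [Fin.eta] at hfin
  rw [hsumconv]
  rw [hFi, hFj] at hfin
  convert hfin using 3
end
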